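/- Let G be a finite group and V a finite-dimensional complex representation of G whose character χ is integer-valued, i.e. for every h ∈ G the value χ(h) is a rational integer. Then for every prime p and every g ∈ G, the integer χ(g) − χ(g^p) is divisible by p. -/

import Mathlib

open Module

/-- Freshman's dream for finite sums, modulo a prime `p`, in any commutative ring. -/
lemma aux_sum_pow {R : Type*} [CommRing R] {p : ℕ} (hp : p.Prime) {ι : Type*}
    (s : Finset ι) (f : ι → R) :
    (p : R) ∣ (∑ i ∈ s, f i) ^ p - ∑ i ∈ s, f i ^ p := by
  classical
  refine Finset.induction_on s (by simp [zero_pow hp.ne_zero]) ?_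
  intro a s ha ih
  obtain ⟨r, hr⟩ := exists_add_pow_prime_eq hp (f a) (∑ i ∈ s, f i)
  rw [Finset.sum_insert ha, Finset.sum_insert ha, hr]
  have h4 : f a ^ p + (∑ i ∈ s, f i) ^ p + (p * f a * ∑ i ∈ s, f i) * r - (f a ^ p + ∑ i ∈ s, f i ^ p)
      = ((∑ i ∈ s, f i) ^ p - ∑ i ∈ s, f i ^ p) + p * (f a * (∑ i ∈ s, f i) * r) := by ring
  rw [h4]
  exact dvd_add ih ⟨_, rfl⟩

/-- Fermat's little theorem over `ℤ`. -/
lemma aux_fermat {p : ℕ} (hp : p.Prime) (d : ℤ) : (p : ℤ) ∣ d ^ p - d := by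
  haveI : Fact p.Prime := ⟨hp⟩
  have : ((d ^ p - d : ℤ) : ZMod p) = 0 := by
    push_cast
    rw [ZMod.pow_card]
    ring
  exact (ZMod.intCast_zmod_eq_zero_iff_dvd _ _).mp this

/-- A rational integer which is divisible by `p` in the algebraic integers is divisible by `p`
in `ℤ`. -/
lemma aux_descent {p : ℕ} (hp : p.Prime) {a : ℤ} {z : ℂ} (hz : IsIntegral ℤ z)
    (h : (a : ℂ) = p * z) : (p : ℤ) ∣ a := by
  have hp0 : (p : ℚ) ≠ 0 := Nat.cast_ne_zero.mpr hp.ne_zero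
  have hpc : (p : ℂ) ≠ 0 := Nat.cast_ne_zero.mpr hp.ne_zero
  set q : ℚ := a / p with hq
  have hcast : (algebraMap ℚ ℂ) q = z := by
    rw [eq_ratCast (algebraMap ℚ ℂ) q, hq]
    push_cast
    rw [h]
    field_simp
  have hqint : IsIntegral ℤ q := by
    rw [← isIntegral_algebraMap_iff (algebraMap ℚ ℂ).injective, hcast]
    exact hz
  obtain ⟨y, hy⟩ := IsIntegrallyClosed.isIntegral_iff.mp hqint
  refine ⟨y, ?_⟩
  have hy' : (y : ℚ) = q := by rw [← hy]; simp
  have hfinal : (a : ℚ) = p * y := by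
    rw [hy', hq]
    field_simp
  exact_mod_cast hfinal

/-- If the character of a finite-dimensional complex representation of a finite group
takes integer values, then `χ(g) ≡ χ(g^p) (mod p)` for every prime `p`. -/
theorem stmt_10 {G : Type*} [Group G] [Finite G] {V : Type*} [AddCommGroup V] [Module ℂ V]
    [FiniteDimensional ℂ V] (ρ : Representation ℂ G V) (χ : G → ℤ)
    (hχ : ∀ h : G, LinearMap.trace ℂ V (ρ h) = (χ h : ℂ))
    (p : ℕ) (hp : p.Prime) (g : G) :
    (p : ℤ) ∣ χ g - χ (g ^ p) := by
  classical
  set f : Module.End ℂ V := ρ g with hfdef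
  set m : ℕ := orderOf g with hmdef
  have hm0 : 0 < m := orderOf_pos g
  have hfm : f ^ m = 1 := by
    rw [hfdef, ← map_pow, hmdef, pow_orderOf_eq_one, map_one]
  -- `f` is semisimple since it is annihilated by the squarefree polynomial `X ^ m - 1`.
  have hsq : Squarefree (Polynomial.X ^ m - 1 : Polynomial ℂ) := by
    refine (Polynomial.X_pow_sub_one_separable_iff.mpr ?_).squarefree
    exact_mod_cast Nat.cast_ne_zero.mpr hm0.ne'
  have hss : f.IsSemisimple := by
    refine Module.End.isSemisimple_of_squarefree_aeval_eq_zero hsq ?_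
    simp [hfm]
  -- eigenspace decomposition
  have htop : ⨆ μ : ℂ, f.eigenspace μ = ⊤ := by
    have h1 := Module.End.iSup_maxGenEigenspace_eq_top f
    simp_rw [← hss.isFinitelySemisimple.maxGenEigenspace_eq_eigenspace]
    exact h1
  have hds : DirectSum.IsInternal f.eigenspace :=
    DirectSum.isInternal_submodule_of_iSupIndep_of_iSup_eq_top f.eigenspaces_iSupIndep htop
  have hfin : {μ : ℂ | f.eigenspace μ ≠ ⊥}.Finite :=
    WellFoundedGT.finite_ne_bot_of_iSupIndep f.eigenspaces_iSupIndep
  set T : Finset ℂ := hfin.toFinset with hTdef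
  set d : ℂ → ℕ := fun μ => Module.finrank ℂ (f.eigenspace μ) with hddef
  -- powers of `f` act on eigenspaces by scalars
  have hpow : ∀ (n : ℕ) (μ : ℂ) (x : V), x ∈ f.eigenspace μ → (f ^ n) x = μ ^ n • x := by
    intro n μ x hx
    have hx' : f x = μ • x := Module.End.mem_eigenspace_iff.mp hx
    induction n with
    | zero => simp
    | succ n ih =>
      rw [pow_succ', pow_succ']
      calc (f * f ^ n) x = f ((f ^ n) x) := rfl
        _ = f (μ ^ n • x) := by rw [ih]
        _ = μ ^ n • f x := map_smul f _ _
        _ = μ ^ n • μ • x := by rw [hx']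
        _ = (μ * μ ^ n) • x := by rw [smul_smul, mul_comm]
  have hmaps : ∀ (n : ℕ) (μ : ℂ), Set.MapsTo (f ^ n) (f.eigenspace μ) (f.eigenspace μ) := by
    intro n μ x hx
    have := hpow n μ x hx
    simp only [Set.mem_setOf_eq, SetLike.mem_coe] at *
    rw [this]
    exact Submodule.smul_mem _ _ hx
  -- trace formula
  have htr : ∀ n : ℕ, LinearMap.trace ℂ V (f ^ n) = ∑ μ ∈ T, μ ^ n * (d μ : ℂ) := by
    intro n
    rw [LinearMap.trace_eq_sum_trace_restrict' hds hfin (hmaps n)]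
    refine Finset.sum_congr rfl fun μ hμ => ?_
    have hres : (f ^ n).restrict (hmaps n μ) = (μ ^ n) • (LinearMap.id (R := ℂ)) := by
      ext x
      have := hpow n μ x.1 x.2
      exact this
    rw [hres, map_smul, LinearMap.trace_id]
    simp [hddef]
  -- values of the character
  have hA : (χ g : ℂ) = ∑ μ ∈ T, μ * (d μ : ℂ) := by
    rw [← hχ g]
    have := htr 1
    simpa [pow_one] using this
  have hB : (χ (g ^ p) : ℂ) = ∑ μ ∈ T, μ ^ p * (d μ : ℂ) := by
    rw [← hχ (g ^ p)]
    have : ρ (g ^ p) = f ^ p := by rw [map_pow, hfdef]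
    rw [this, htr p]
  -- eigenvalues are roots of unity, hence algebraic integers
  have hint : ∀ μ ∈ T, IsIntegral ℤ μ := by
    intro μ hμ
    have hne : f.eigenspace μ ≠ ⊥ := by
      simpa [hTdef] using hμ
    obtain ⟨x, hx, hx0⟩ := (Submodule.ne_bot_iff _).mp hne
    have h1 : (f ^ m) x = μ ^ m • x := hpow m μ x hx
    rw [hfm] at h1
    have hroot : μ ^ m = 1 := by
      by_contra hc
      have : (μ ^ m - 1) • x = 0 := by
        rw [sub_smul, one_smul, ← h1]
        exact sub_eq_zero_of_eq rfl
      rcases smul_eq_zero.mp this with h | h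
      · exact hc (by linear_combination h)
      · exact hx0 h
    refine ⟨Polynomial.X ^ m - Polynomial.C 1, Polynomial.monic_X_pow_sub_C 1 hm0.ne', ?_⟩
    simp [Polynomial.eval₂_sub, hroot]
  -- work in the ring of algebraic integers
  set O := integralClosure ℤ ℂ with hOdef
  set u : {x // x ∈ T} → O := fun x => ⟨x.1, hint x.1 x.2⟩ with hudef
  set A : O := ∑ x ∈ T.attach, u x * (d x.1 : O) with hAdef
  set B : O := ∑ x ∈ T.attach, u x ^ p * (d x.1 : O) with hBdef
  have hcoeA : (A : ℂ) = ∑ μ ∈ T, μ * (d μ : ℂ) := by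
    rw [hAdef]
    push_cast
    rw [← Finset.sum_attach T (fun μ => μ * (d μ : ℂ))]
  have hcoeB : (B : ℂ) = ∑ μ ∈ T, μ ^ p * (d μ : ℂ) := by
    rw [hBdef]
    push_cast
    rw [← Finset.sum_attach T (fun μ => μ ^ p * (d μ : ℂ))]
  -- key congruence in the algebraic integers
  have hkey : (p : O) ∣ A ^ p - B := by
    have hr := aux_sum_pow (R := O) hp T.attach (fun x => u x * (d x.1 : O))
    have h2 : (p : O) ∣ (∑ x ∈ T.attach, (u x * (d x.1 : O)) ^ p) - B := by
      rw [hBdef, ← Finset.sum_sub_distrib]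
      refine Finset.dvd_sum fun x _ => ?_
      have : (u x * (d x.1 : O)) ^ p - u x ^ p * (d x.1 : O)
          = u x ^ p * ((d x.1 : O) ^ p - (d x.1 : O)) := by ring
      rw [this]
      refine Dvd.dvd.mul_left ?_ _
      obtain ⟨c, hc⟩ := aux_fermat hp (d x.1 : ℤ)
      refine ⟨(c : O), ?_⟩
      calc (d x.1 : O) ^ p - (d x.1 : O) = (((d x.1 : ℤ) ^ p - (d x.1 : ℤ) : ℤ) : O) := by
            push_cast; ring
        _ = (((p : ℤ) * c : ℤ) : O) := by rw [hc]
        _ = (p : O) * (c : O) := by push_cast; ring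
    have h3 : A ^ p - B = (A ^ p - ∑ x ∈ T.attach, (u x * (d x.1 : O)) ^ p)
        + ((∑ x ∈ T.attach, (u x * (d x.1 : O)) ^ p) - B) := by ring
    rw [h3]
    exact dvd_add hr h2
  -- identify `A` and `B` with the character values
  have hAval : (A : ℂ) = (χ g : ℂ) := by rw [hcoeA, hA]
  have hBval : (B : ℂ) = (χ (g ^ p) : ℂ) := by rw [hcoeB, hB]
  -- descend divisibility to ℤ
  obtain ⟨z, hz⟩ := hkey
  have hzeq : ((χ g : ℤ) ^ p - χ (g ^ p) : ℂ) = p * (z : ℂ) := by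
    have := congrArg (Subtype.val : O → ℂ) hz
    push_cast at this
    rw [hAval, hBval] at this
    exact_mod_cast this
  have hdvd1 : (p : ℤ) ∣ (χ g) ^ p - χ (g ^ p) := aux_descent hp z.2 (by exact_mod_cast hzeq)
  have hdvd2 : (p : ℤ) ∣ (χ g) ^ p - χ g := aux_fermat hp (χ g)
  have : χ g - χ (g ^ p) = ((χ g) ^ p - χ (g ^ p)) - ((χ g) ^ p - χ g) := by ring
  rw [this]
  exact dvd_sub hdvd1 hdvd2
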